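/- arXiv:math/0309135 — 2 statements merged into one kernel-verified Lean document; each statement's English description precedes it below -/
import Mathlib

section
/- Let n ≥ 1 and let π be a permutation of {1, …, n+1}. For every i ∈ {1, …, n}, the number of j ∈ {1, …, n} such that (i,j) is a box for π is odd (in particular it is at least 1). -/
/-- `(i,j)` is a box for the permutation `π` with inverse `σ`:
`min(π i, π (i+1)) ≤ j < max(π i, π (i+1))` and `min(σ j, σ (j+1)) ≤ i < max(σ j, σ (j+1))`. -/
def IsBox (π σ : ℕ → ℕ) (i j : ℕ) : Prop :=
  min (π i) (π (i+1)) ≤ j ∧ j < max (π i) (π (i+1)) ∧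
  min (σ j) (σ (j+1)) ≤ i ∧ i < max (σ j) (σ (j+1))

instance (π σ : ℕ → ℕ) (i j : ℕ) : Decidable (IsBox π σ i j) := by
  unfold IsBox; infer_instance

/-- A box `(i,j)` is windmilled if exactly one of `π i > j` and `σ j > i` holds. -/
def Windmilled (π σ : ℕ → ℕ) (i j : ℕ) : Prop :=
  IsBox π σ i j ∧ Xor (j < π i) (i < σ j)

instance (π σ : ℕ → ℕ) (i j : ℕ) : Decidable (Windmilled π σ i j) := by
  unfold Windmilled; infer_instance

/-- The matrix `A(π)`: `-1` on windmilled boxes, `1` on non-windmilled boxes, `0` elsewhere. -/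
def AMat (π σ : ℕ → ℕ) (i j : ℕ) : ℤ :=
  if Windmilled π σ i j then -1 else if IsBox π σ i j then 1 else 0

/-- Baxter condition (dividing-line form) for a permutation `π` of `{1, …, n+1}`
with inverse `σ`. -/
def IsBaxter (n : ℕ) (π σ : ℕ → ℕ) : Prop :=
  ∀ i ∈ Finset.Icc 1 n,
    ∃ c, min (π i) (π (i+1)) ≤ c ∧ c < max (π i) (π (i+1)) ∧
      ∀ d, min (π i) (π (i+1)) < d → d < max (π i) (π (i+1)) →
        (π i < π (i+1) → (d ≤ c → σ d < i) ∧ (c < d → σ d > i + 1)) ∧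
        (π (i+1) < π i → (d ≤ c → σ d > i + 1) ∧ (c < d → σ d < i))

lemma parity_aux (f : ℕ → Bool) (a : ℕ) : ∀ b, a ≤ b →
    (Odd ((Finset.Ico a b).filter (fun j => f j ≠ f (j+1))).card ↔ f a ≠ f b) := by
  intro b
  induction b with
  | zero =>
    intro h
    have : a = 0 := by omega
    subst this; simp
  | succ b ih =>
    intro h
    rcases Nat.lt_or_ge a (b+1) with h' | h'
    · have hab : a ≤ b := by omega
      have hins : Finset.Ico a (b+1) = insert b (Finset.Ico a b) := by
        ext x; simp only [Finset.mem_Ico, Finset.mem_insert]; omega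
      rw [hins, Finset.filter_insert]
      by_cases hfb : f b ≠ f (b+1)
      · rw [if_pos hfb, Finset.card_insert_of_notMem (by simp)]
        rw [Nat.odd_add_one, not_iff_comm, ih hab]
        cases hfa : f a <;> cases hfb2 : f b <;> cases hfb3 : f (b+1) <;> simp_all
      · rw [if_neg hfb, ih hab]
        cases hfa : f a <;> cases hfb2 : f b <;> cases hfb3 : f (b+1) <;> simp_all
    · have : a = b + 1 := by omega
      subst this; simp

theorem stmt2 (n : ℕ) (hn : 1 ≤ n) (π : Equiv.Perm ℕ)
    (hπ : ∀ k ∈ Finset.Icc 1 (n+1), π k ∈ Finset.Icc 1 (n+1))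
    (i : ℕ) (hi : i ∈ Finset.Icc 1 n) :
    Odd ((Finset.Icc 1 n).filter (fun j => IsBox (⇑π) (⇑π.symm) i j)).card ∧
    1 ≤ ((Finset.Icc 1 n).filter (fun j => IsBox (⇑π) (⇑π.symm) i j)).card := by
  simp only [Finset.mem_Icc] at hi
  have hi1 : π i ∈ Finset.Icc 1 (n+1) := hπ i (by simp; omega)
  have hi2 : π (i+1) ∈ Finset.Icc 1 (n+1) := hπ (i+1) (by simp; omega)
  simp only [Finset.mem_Icc] at hi1 hi2
  have hne : π i ≠ π (i+1) := fun h => by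
    have := π.injective h; omega
  set a := min (π i) (π (i+1)) with ha
  set b := max (π i) (π (i+1)) with hb
  set f : ℕ → Bool := fun j => decide (π.symm j ≤ i) with hf
  have hset : (Finset.Icc 1 n).filter (fun j => IsBox (⇑π) (⇑π.symm) i j)
      = (Finset.Ico a b).filter (fun j => f j ≠ f (j+1)) := by
    ext j
    have hσne : π.symm j ≠ π.symm (j+1) := fun h => by
      have := π.symm.injective h; omega
    rw [Finset.mem_filter, Finset.mem_filter]
    simp only [Finset.mem_filter, Finset.mem_Icc, Finset.mem_Ico, IsBox, hf,
      ne_eq, decide_eq_decide]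
    constructor
    · rintro ⟨⟨hj1, hjn⟩, h1, h2, h3, h4⟩
      exact ⟨⟨h1, h2⟩, by omega⟩
    · rintro ⟨⟨h1, h2⟩, h3⟩
      refine ⟨⟨by omega, by omega⟩, h1, h2, by omega, by omega⟩
  rw [hset]
  have hfa : f (π i) = true := by simp [hf]
  have hfb : f (π (i+1)) = false := by simp [hf]
  have hodd : Odd ((Finset.Ico a b).filter (fun j => f j ≠ f (j+1))).card := by
    rw [parity_aux f a b min_le_max]
    rcases le_or_gt (π i) (π (i+1)) with h | h
    · rw [ha, hb, min_eq_left h, max_eq_right h, hfa, hfb]; simp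
    · rw [ha, hb, min_eq_right h.le, max_eq_left h.le, hfa, hfb]; simp
  refine ⟨hodd, ?_⟩
  rcases hodd with ⟨k, hk⟩; omega
end

section
/- Let n ≥ 1, let π be a permutation of {1, …, n+1}, and fix i ∈ {1, …, n}. Let j_1 < j_2 < … < j_r be the complete list of indices j such that (i,j) is a box for π. Then for each t ∈ {1, …, r}, the box (i,j_t) is windmilled if and only if t is even. In particular r is odd, the first and last boxes in row i are non-windmilled, and row i contains exactly (r−1)/2 windmilled boxes and (r+1)/2 non-windmilled boxes. -/
/- ### Auxiliary lemmas -/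

lemma stmt6_card_odd_range (r : ℕ) :
    ((Finset.range r).filter (fun t => Odd t)).card = r / 2 := by
  induction r with
  | zero => simp
  | succ r ih =>
    rw [Finset.range_add_one, Finset.filter_insert]
    by_cases h : Odd r
    · rw [if_pos h, Finset.card_insert_of_notMem (by simp), ih]
      obtain ⟨k, rfl⟩ := h; omega
    · rw [if_neg h, ih]
      rw [Nat.not_odd_iff_even] at h
      obtain ⟨k, rfl⟩ := h; omega

lemma stmt6_gpar (g : ℕ → Bool) (m : ℕ) : ∀ j, m ≤ j →
    (g j = g m ↔ Even (((Finset.Ico m j).filter (fun k => g k ≠ g (k+1))).card)) := by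
  intro j hj
  induction j, hj using Nat.le_induction with
  | base => simp
  | succ j hj ih =>
    rw [Nat.Ico_succ_right_eq_insert_Ico hj, Finset.filter_insert]
    by_cases h : g j = g (j+1)
    · rw [if_neg (by simp [h]), ← h]; exact ih
    · rw [if_pos (by simpa using h),
        Finset.card_insert_of_notMem (by simp [Finset.mem_Ico])]
      rw [Nat.even_add_one, ← ih]
      cases hgj : g j <;> cases hgj1 : g (j+1) <;> cases hgm : g m <;> simp_all

lemma stmt6_card_filter_lt_sort (S : Finset ℕ) (l : List ℕ) (hl : l = S.sort (· ≤ ·))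
    (t : ℕ) (ht : t < l.length) :
    (S.filter (fun x => x < l.get ⟨t, ht⟩)).card = t := by
  have hnd : l.Nodup := hl ▸ S.sort_nodup _
  have hslt : l.Pairwise (· < ·) := hl ▸ S.sortedLT_sort.pairwise
  have hmem : ∀ x, x ∈ l ↔ x ∈ S := fun x => hl ▸ Finset.mem_sort _
  have key : S.filter (fun x => x < l.get ⟨t, ht⟩) = (l.take t).toFinset := by
    ext x
    simp only [Finset.mem_filter, List.mem_toFinset]
    constructor
    · rintro ⟨hx, hlt⟩
      obtain ⟨s, hs, rfl⟩ := List.mem_iff_getElem.1 ((hmem x).2 hx)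
      have hst : s < t := by
        by_contra hcon
        have : l.get ⟨t, ht⟩ < l.get ⟨s, hs⟩ ∨ l.get ⟨t, ht⟩ = l.get ⟨s, hs⟩ := by
          rcases lt_or_eq_of_le (Nat.le_of_not_lt hcon) with h | h
          · exact Or.inl (hslt.rel_get_of_lt (by exact h))
          · exact Or.inr (by congr 1; exact Fin.ext (by simpa using h))
        simp only [List.get_eq_getElem] at this hlt
        omega
      exact List.mem_take_iff_getElem.2 ⟨s, by omega, rfl⟩
    · intro hx
      obtain ⟨s, hs, rfl⟩ := List.mem_take_iff_getElem.1 hx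
      have hs' : s < l.length := lt_of_lt_of_le hs (min_le_right _ _)
      refine ⟨(hmem _).1 (List.getElem_mem hs'), ?_⟩
      have : s < t := lt_of_lt_of_le hs (min_le_left _ _)
      exact hslt.rel_get_of_lt (a := ⟨s, hs'⟩) (b := ⟨t, ht⟩) this
  rw [key, List.toFinset_card_of_nodup (hnd.sublist (List.take_sublist t l)),
    List.length_take]
  omega

lemma stmt6_box_iff (π : Equiv.Perm ℕ) (i j : ℕ) :
    IsBox (⇑π) (⇑π.symm) i j ↔
      (min (π i) (π (i+1)) ≤ j ∧ j < max (π i) (π (i+1)) ∧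
        decide (π.symm j ≤ i) ≠ decide (π.symm (j+1) ≤ i)) := by
  unfold IsBox
  have : (decide (π.symm j ≤ i) ≠ decide (π.symm (j+1) ≤ i)) ↔
      ¬ ((π.symm j ≤ i) ↔ (π.symm (j+1) ≤ i)) := by
    simp [decide_eq_decide]
  rw [this]
  omega

lemma stmt6_wind_iff (π : Equiv.Perm ℕ) (i j : ℕ) :
    Windmilled (⇑π) (⇑π.symm) i j ↔
      (IsBox (⇑π) (⇑π.symm) i j ∧
        decide (π.symm j ≤ i) ≠ decide (π.symm (min (π i) (π (i+1))) ≤ i)) := by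
  unfold Windmilled
  refine and_congr_right fun hb => ?_
  obtain ⟨h1, h2, -⟩ := hb
  have hσa : π.symm (π i) = i := π.symm_apply_apply i
  have hσb : π.symm (π (i+1)) = i + 1 := π.symm_apply_apply (i+1)
  rcases lt_trichotomy (π i) (π (i+1)) with h | h | h
  · rw [min_eq_left h.le] at h1 ⊢
    have hja : ¬ (j < π i) := by omega
    rw [hσa]
    simp only [Xor', ne_eq, decide_eq_decide]
    simp [hja]
  · exfalso; rw [h] at h2 h1; omega
  · rw [min_eq_right h.le] at h1 ⊢
    have hja : j < π i := by omega
    rw [hσb]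
    simp only [Xor', ne_eq, decide_eq_decide]
    simp [hja]

theorem stmt6 (n : ℕ) (hn : 1 ≤ n) (π : Equiv.Perm ℕ)
    (hπ : ∀ k ∈ Finset.Icc 1 (n+1), π k ∈ Finset.Icc 1 (n+1))
    (i : ℕ) (hi : i ∈ Finset.Icc 1 n)
    (l : List ℕ)
    (hl : l = ((Finset.Icc 1 n).filter (fun j => IsBox (⇑π) (⇑π.symm) i j)).sort (· ≤ ·)) :
    (∀ t (ht : t < l.length), (Windmilled (⇑π) (⇑π.symm) i (l.get ⟨t, ht⟩) ↔ Odd t)) ∧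
    Odd l.length ∧
    (∀ j, l.head? = some j → ¬ Windmilled (⇑π) (⇑π.symm) i j) ∧
    (∀ j, l.getLast? = some j → ¬ Windmilled (⇑π) (⇑π.symm) i j) ∧
    ((Finset.Icc 1 n).filter (fun j => Windmilled (⇑π) (⇑π.symm) i j)).card
      = (l.length - 1) / 2 ∧
    ((Finset.Icc 1 n).filter
        (fun j => IsBox (⇑π) (⇑π.symm) i j ∧ ¬ Windmilled (⇑π) (⇑π.symm) i j)).card
      = (l.length + 1) / 2 := by
  rw [Finset.mem_Icc] at hi
  have hpa := Finset.mem_Icc.1 (hπ i (Finset.mem_Icc.2 ⟨hi.1, by omega⟩))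
  have hpb := Finset.mem_Icc.1 (hπ (i+1) (Finset.mem_Icc.2 ⟨by omega, by omega⟩))
  have hab : π i ≠ π (i+1) := fun h => by
    have := π.injective h; omega
  set g : ℕ → Bool := fun j => decide (π.symm j ≤ i) with hg
  set m : ℕ := min (π i) (π (i+1)) with hm
  set M : ℕ := max (π i) (π (i+1)) with hM
  set S : Finset ℕ := (Finset.Icc 1 n).filter (fun j => IsBox (⇑π) (⇑π.symm) i j) with hSdef
  have hσa : π.symm (π i) = i := π.symm_apply_apply i
  have hσb : π.symm (π (i+1)) = i + 1 := π.symm_apply_apply (i+1)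
  have hmM : m < M := by omega
  have hm1 : 1 ≤ m := by omega
  have hMn : M ≤ n + 1 := by omega
  have hgm : g m ≠ g M := by
    rcases lt_or_gt_of_ne hab with h | h
    · rw [hm, hM, min_eq_left h.le, max_eq_right h.le, hg]
      simp only [hσa, hσb, ne_eq, decide_eq_decide]
      omega
    · rw [hm, hM, min_eq_right h.le, max_eq_left h.le, hg]
      simp only [hσa, hσb, ne_eq, decide_eq_decide]
      omega
  have hbox : ∀ j, IsBox (⇑π) (⇑π.symm) i j ↔ (m ≤ j ∧ j < M ∧ g j ≠ g (j+1)) := by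
    intro j
    rw [stmt6_box_iff, ← hm, ← hM, hg]
  have hwind : ∀ j, Windmilled (⇑π) (⇑π.symm) i j ↔
      (IsBox (⇑π) (⇑π.symm) i j ∧ g j ≠ g m) := by
    intro j
    rw [stmt6_wind_iff, ← hm, hg]
  have hS : S = (Finset.Ico m M).filter (fun j => g j ≠ g (j+1)) := by
    rw [hSdef]
    ext j
    simp only [Finset.mem_filter, Finset.mem_Icc, Finset.mem_Ico, hbox]
    constructor
    · rintro ⟨_, h1, h2, h3⟩; exact ⟨⟨h1, h2⟩, h3⟩
    · rintro ⟨⟨h1, h2⟩, h3⟩; exact ⟨⟨by omega, by omega⟩, h1, h2, h3⟩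
  have hlen : l.length = S.card := by rw [hl]; exact Finset.length_sort _
  have hmemlS : ∀ x, x ∈ l ↔ x ∈ S := fun x => by
    rw [hl]; exact Finset.mem_sort _
  -- Part 1
  have part1 : ∀ t (ht : t < l.length),
      (Windmilled (⇑π) (⇑π.symm) i (l.get ⟨t, ht⟩) ↔ Odd t) := by
    intro t ht
    set x := l.get ⟨t, ht⟩ with hx
    have hxS : x ∈ S := (hmemlS x).1 (l.get_mem ⟨t, ht⟩)
    have hxS' := hxS
    rw [hS, Finset.mem_filter, Finset.mem_Ico] at hxS'
    obtain ⟨⟨hx1, hx2⟩, hx3⟩ := hxS'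
    have hxbox : IsBox (⇑π) (⇑π.symm) i x := (Finset.mem_filter.1 hxS).2
    have e1 : S.filter (fun y => y < x) =
        (Finset.Ico m x).filter (fun k => g k ≠ g (k+1)) := by
      rw [hS]
      ext k
      simp only [Finset.mem_filter, Finset.mem_Ico]
      constructor
      · rintro ⟨⟨⟨k1, k2⟩, k3⟩, k4⟩; exact ⟨⟨k1, k4⟩, k3⟩
      · rintro ⟨⟨k1, k2⟩, k3⟩; exact ⟨⟨⟨k1, by omega⟩, k3⟩, k2⟩
    have e2 := stmt6_card_filter_lt_sort S l hl t ht
    have e3 := stmt6_gpar g m x hx1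
    rw [← e1] at e3
    rw [← hx] at e2
    rw [e2] at e3
    rw [hwind]
    constructor
    · rintro ⟨-, h⟩
      rw [← Nat.not_even_iff_odd, ← e3]
      exact h
    · intro h
      refine ⟨hxbox, ?_⟩
      rw [← Nat.not_even_iff_odd, ← e3] at h
      exact h
  -- Part 2
  have part2 : Odd l.length := by
    have e4 := stmt6_gpar g m M hmM.le
    rw [← hS] at e4
    rw [← Nat.not_even_iff_odd, hlen]
    intro hev
    exact hgm (e4.2 hev).symm
  have hcardW : ((Finset.Icc 1 n).filter
      (fun j => Windmilled (⇑π) (⇑π.symm) i j)).card = l.length / 2 := by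
    have hcb : ((Finset.range l.length).filter (fun t => Odd t)).card
        = ((Finset.Icc 1 n).filter (fun j => Windmilled (⇑π) (⇑π.symm) i j)).card := by
      refine Finset.card_bij
        (fun t htm => l.get ⟨t, Finset.mem_range.1 (Finset.mem_filter.1 htm).1⟩) ?_ ?_ ?_
      · intro t htm
        have ht := Finset.mem_range.1 (Finset.mem_filter.1 htm).1
        have hodd := (Finset.mem_filter.1 htm).2
        have hw := (part1 t ht).2 hodd
        have hxS : l.get ⟨t, ht⟩ ∈ S := (hmemlS _).1 (l.get_mem ⟨t, ht⟩)
        exact Finset.mem_filter.2 ⟨(Finset.mem_filter.1 hxS).1, hw⟩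
      · intro a ha b hb heq
        have hnd : l.Nodup := hl ▸ Finset.sort_nodup _ _
        have := List.nodup_iff_injective_get.1 hnd heq
        exact congrArg Fin.val this
      · intro j hjm
        obtain ⟨hIcc, hw⟩ := Finset.mem_filter.1 hjm
        have hjS : j ∈ S := Finset.mem_filter.2 ⟨hIcc, hw.1⟩
        have hjl : j ∈ l := (hmemlS j).2 hjS
        obtain ⟨⟨t, ht⟩, rfl⟩ := List.mem_iff_get.1 hjl
        exact ⟨t, Finset.mem_filter.2 ⟨Finset.mem_range.2 ht, (part1 t ht).1 hw⟩, rfl⟩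
    rw [← hcb, stmt6_card_odd_range]
  refine ⟨part1, part2, ?_, ?_, ?_, ?_⟩
  -- Part 3
  · intro j hj
    have hne : l ≠ [] := by rintro rfl; simp at hj
    have h0 : 0 < l.length := List.length_pos_iff.2 hne
    rw [List.head?_eq_head hne, Option.some_inj] at hj
    have hjeq : j = l.get ⟨0, h0⟩ := by
      rw [← hj, List.head_eq_getElem]; simp
    rw [hjeq, part1 0 h0]
    simp [Nat.odd_iff]
  -- Part 4
  · intro j hj
    have hne : l ≠ [] := by rintro rfl; simp at hj
    have h0 : l.length - 1 < l.length := by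
      have := List.length_pos_iff.2 hne; omega
    rw [List.getLast?_eq_getLast hne, Option.some_inj] at hj
    have hjeq : j = l.get ⟨l.length - 1, h0⟩ := by
      rw [← hj, List.getLast_eq_getElem]; simp
    rw [hjeq, part1 _ h0]
    obtain ⟨k, hk⟩ := part2
    rw [Nat.odd_iff]
    omega
  -- Part 5
  · rw [hcardW]
    obtain ⟨k, hk⟩ := part2
    omega
  -- Part 6
  · have hsub : (Finset.Icc 1 n).filter (fun j => Windmilled (⇑π) (⇑π.symm) i j) ⊆ S := by
      intro j hj
      obtain ⟨h1, h2⟩ := Finset.mem_filter.1 hj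
      exact Finset.mem_filter.2 ⟨h1, h2.1⟩
    have hNd : (Finset.Icc 1 n).filter
        (fun j => IsBox (⇑π) (⇑π.symm) i j ∧ ¬ Windmilled (⇑π) (⇑π.symm) i j)
        = S \ (Finset.Icc 1 n).filter (fun j => Windmilled (⇑π) (⇑π.symm) i j) := by
      ext j
      simp only [hSdef, Finset.mem_filter, Finset.mem_sdiff]
      tauto
    rw [hNd, Finset.card_sdiff_of_subset hsub, hcardW, ← hlen]
    obtain ⟨k, hk⟩ := part2
    omega
end
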